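/- Let y₀ ∈ (0,1) and let the sequences (xᵢ)ᵢ≥₀, (yᵢ)ᵢ≥₀, (aᵢ)ᵢ≥₁, (bᵢ)ᵢ≥₁ be defined by the strip recursion, and assume that for every i ≥ 1 the denominator Dᵢ = (aᵢ − x_{i−1})(1 + y_{i−1}) + (bᵢ − x_{i−1})(1 − y_{i−1}) is nonzero and yᵢ ∉ {1, −1}. Then for every i ≥ 1 the identity 4i − 3 = (1/2)·((x_{i−1} + aᵢ)(1 − y_{i−1}) + (x_{i−1} + bᵢ)(1 + y_{i−1})) holds. -/
import Mathlib


noncomputable section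

/-- The denominator `Dᵢ = (aᵢ − x_{i−1})(1 + y_{i−1}) + (bᵢ − x_{i−1})(1 − y_{i−1})`. -/
def StripDenom (x y a b : ℕ → ℝ) (i : ℕ) : ℝ :=
  (a i - x (i - 1)) * (1 + y (i - 1)) + (b i - x (i - 1)) * (1 - y (i - 1))

/-- The strip recursion: `x₀ = 0`, `a₁ = 1/(1 − y₀)`, `b₁ = 1/(1 + y₀)`, and for `i ≥ 1`:
`xᵢ = x_{i−1} + 2 − 2(aᵢ − bᵢ)y_{i−1}/Dᵢ`, `yᵢ = y_{i−1} − 4y_{i−1}/Dᵢ`,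
`a_{i+1} = aᵢ + 2/(1 − yᵢ)`, `b_{i+1} = bᵢ + 2/(1 + yᵢ)`. -/
def StripRec (x y a b : ℕ → ℝ) : Prop :=
  x 0 = 0 ∧ a 1 = 1 / (1 - y 0) ∧ b 1 = 1 / (1 + y 0) ∧
    ∀ i : ℕ, 1 ≤ i →
      x i = x (i - 1) + 2 - 2 * (a i - b i) * y (i - 1) / StripDenom x y a b i ∧
      y i = y (i - 1) - 4 * y (i - 1) / StripDenom x y a b i ∧
      a (i + 1) = a i + 2 / (1 - y i) ∧
      b (i + 1) = b i + 2 / (1 + y i)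

/-- The identity `4i − 3 = ½((x_{i−1} + aᵢ)(1 − y_{i−1}) + (x_{i−1} + bᵢ)(1 + y_{i−1}))`
for the strip recursion. -/
theorem statement4 (x y a b : ℕ → ℝ) (hy0 : y 0 ∈ Set.Ioo (0 : ℝ) 1)
    (hrec : StripRec x y a b)
    (hD : ∀ i : ℕ, 1 ≤ i → StripDenom x y a b i ≠ 0)
    (hy : ∀ i : ℕ, 1 ≤ i → y i ≠ 1 ∧ y i ≠ -1) :
    ∀ i : ℕ, 1 ≤ i →
      4 * (i : ℝ) - 3 =
        (1 / 2) * ((x (i - 1) + a i) * (1 - y (i - 1)) + (x (i - 1) + b i) * (1 + y (i - 1))) := by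
  intro i hi
  induction i, hi using Nat.le_induction with
  | base =>
    have hx0 := hrec.1
    have ha1 := hrec.2.1
    have hb1 := hrec.2.2.1
    have h1 : (1:ℝ) - y 0 ≠ 0 := by nlinarith [hy0.2]
    have h2 : (1:ℝ) + y 0 ≠ 0 := by nlinarith [hy0.1]
    simp only [Nat.cast_one, Nat.sub_self, hx0, ha1, hb1]
    field_simp
    ring
  | succ n hn ih =>
    obtain ⟨hx, hyr, ha, hb⟩ := hrec.2.2.2 n hn
    have hDn := hD n hn
    have h1 : (1:ℝ) - y n ≠ 0 := sub_ne_zero.mpr (Ne.symm (hy n hn).1)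
    have h2 : (1:ℝ) + y n ≠ 0 := by
      intro h
      exact (hy n hn).2 (by linarith)
    simp only [Nat.add_sub_cancel]
    have key1 : a (n + 1) * (1 - y n) = a n * (1 - y n) + 2 := by
      rw [ha]; field_simp
    have key2 : b (n + 1) * (1 + y n) = b n * (1 + y n) + 2 := by
      rw [hb]; field_simp
    push_cast
    linear_combination (-1 / 2) * key1 + (-1 / 2) * key2 + ih - hx +
      (1 / 2) * (a n - b n) * hyr
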